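/- Let T be a complete satisfiable L-theory. Suppose there exists a set Φ = {φ_i(x; ȳ_i) : i ∈ I} of partitioned L-formulas (each with x a single variable) such that: (a) for every model M ⊨ T, the family 𝒜_Φ(M) = {φ_i(M; b̄) : i ∈ I, b̄ ∈ M^{lg(ȳ_i)}} of subsets of M has independence dimension ≤ 1 with respect to M; and (b) for every partitioned L-formula ψ(x; ȳ), every model M ⊨ T, and every b̄ ∈ M^{lg(ȳ)}, the set ψ(M; b̄) lies in the Boolean algebra of subsets of M generated by 𝒜_Φ(M). Then every model of T is convexly orderable. -/

import Mathlib

open FirstOrder Language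

/-- `S` is convex with respect to the strict order `r`. -/
def IsRConvex {X : Type*} (r : X → X → Prop) (S : Set X) : Prop :=
  ∀ a b c : X, r a b → r b c → a ∈ S → c ∈ S → b ∈ S

/-- `S` is a union of at most `K` `r`-convex subsets of `X`. -/
def UnionOfAtMostConvex {X : Type*} (r : X → X → Prop) (K : ℕ) (S : Set X) : Prop :=
  ∃ C : Fin K → Set X, (∀ i, IsRConvex r (C i)) ∧ S = ⋃ i, C i

/-- `φ(M; b̄)`, the set defined in `M` by the partitioned formula `φ(x; ȳ)` with
parameters `b̄`. -/
def realizeSet (L : Language) (M : Type*) [L.Structure M] {m : ℕ}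
    (φ : L.Formula (Unit ⊕ Fin m)) (b : Fin m → M) : Set M :=
  {a : M | φ.Realize (Sum.elim (fun _ => a) b)}

/-- An `L`-structure `M` is convexly orderable if there is a linear order on `M` such
that every partitioned formula `φ(x; ȳ)` admits a uniform finite bound `K` such that
each `φ(M; b̄)` is a union of at most `K` convex sets. -/
def ConvexlyOrderable (L : Language) (M : Type*) [L.Structure M] : Prop :=
  ∃ r : M → M → Prop, IsStrictTotalOrder M r ∧
    ∀ (m : ℕ) (φ : L.Formula (Unit ⊕ Fin m)), ∃ K : ℕ,
      ∀ b : Fin m → M, UnionOfAtMostConvex r K (realizeSet L M φ b)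


/-- A family of subsets of `X` has independence dimension `≤ 1` with respect to `X`. -/
def IndepDimLEOne {X : Type*} (𝒜 : Set (Set X)) : Prop :=
  ∀ A ∈ 𝒜, ∀ B ∈ 𝒜, A ∩ B = ∅ ∨ A \ B = ∅ ∨ B \ A = ∅ ∨ (A ∪ B)ᶜ = ∅

/-- The Boolean algebra of subsets of `X` generated by a family `G`. -/
inductive GenBoolAlg {X : Type*} (G : Set (Set X)) : Set X → Prop
  | base {A : Set X} : A ∈ G → GenBoolAlg G A
  | compl {A : Set X} : GenBoolAlg G A → GenBoolAlg G Aᶜ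
  | union {A B : Set X} : GenBoolAlg G A → GenBoolAlg G B → GenBoolAlg G (A ∪ B)
  | inter {A B : Set X} : GenBoolAlg G A → GenBoolAlg G B → GenBoolAlg G (A ∩ B)


namespace CvxAux

variable {X : Type*} {r : X → X → Prop}

lemma isRConvex_empty : IsRConvex r (∅ : Set X) := fun _ _ _ _ _ h _ => h.elim

lemma isRConvex_inter {S T : Set X} (hS : IsRConvex r S) (hT : IsRConvex r T) :
    IsRConvex r (S ∩ T) := fun a b c h1 h2 ha hc =>
  ⟨hS a b c h1 h2 ha.1 hc.1, hT a b c h1 h2 ha.2 hc.2⟩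

lemma uamc_mono {S : Set X} {j k : ℕ} (h : UnionOfAtMostConvex r j S) (hjk : j ≤ k) :
    UnionOfAtMostConvex r k S := by
  obtain ⟨C, hC, hU⟩ := h
  refine ⟨fun i => if h : (i : ℕ) < j then C ⟨i, h⟩ else ∅, fun i => ?_, ?_⟩
  · dsimp only
    split
    · exact hC _
    · exact isRConvex_empty
  · rw [hU]
    ext x
    simp only [Set.mem_iUnion]
    constructor
    · rintro ⟨i, hi⟩
      exact ⟨⟨i, lt_of_lt_of_le i.2 hjk⟩, by simp [i.2, hi]⟩
    · rintro ⟨i, hi⟩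
      by_cases h' : (i:ℕ) < j
      · rw [dif_pos h'] at hi; exact ⟨_, hi⟩
      · rw [dif_neg h'] at hi; exact hi.elim

lemma uamc_of_convex {S : Set X} (h : IsRConvex r S) : UnionOfAtMostConvex r 1 S :=
  ⟨fun _ => S, fun _ => h, by simp [Set.iUnion_const]⟩

lemma uamc_union {S T : Set X} {j k : ℕ} (hS : UnionOfAtMostConvex r j S)
    (hT : UnionOfAtMostConvex r k T) : UnionOfAtMostConvex r (j + k) (S ∪ T) := by
  obtain ⟨C, hC, hCU⟩ := hS
  obtain ⟨D, hD, hDU⟩ := hT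
  refine ⟨fun i => if h : (i : ℕ) < j then C ⟨i, h⟩ else D ⟨(i : ℕ) - j, by omega⟩,
    fun i => ?_, ?_⟩
  · dsimp only; split
    · exact hC _
    · exact hD _
  · rw [hCU, hDU]
    ext x
    simp only [Set.mem_union, Set.mem_iUnion]
    constructor
    · rintro (⟨i, hi⟩ | ⟨i, hi⟩)
      · exact ⟨⟨i, by omega⟩, by simp [i.2, hi]⟩
      · refine ⟨⟨j + i, by omega⟩, ?_⟩
        have : ¬ ((j + (i : ℕ)) < j) := by omega
        simp only [this, dif_neg, not_false_iff]
        have : j + (i : ℕ) - j = (i : ℕ) := by omega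
        simpa [this]
    · rintro ⟨i, hi⟩
      split at hi
      · exact Or.inl ⟨_, hi⟩
      · exact Or.inr ⟨_, hi⟩

lemma uamc_inter {S T : Set X} {j k : ℕ} (hS : UnionOfAtMostConvex r j S)
    (hT : UnionOfAtMostConvex r k T) : UnionOfAtMostConvex r (j * k) (S ∩ T) := by
  obtain ⟨C, hC, hCU⟩ := hS
  obtain ⟨D, hD, hDU⟩ := hT
  refine ⟨fun i => C (finProdFinEquiv.symm i).1 ∩ D (finProdFinEquiv.symm i).2,
    fun i => isRConvex_inter (hC _) (hD _), ?_⟩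
  rw [hCU, hDU]
  ext x
  simp only [Set.mem_inter_iff, Set.mem_iUnion]
  constructor
  · rintro ⟨⟨i, hi⟩, ⟨i', hi'⟩⟩
    exact ⟨finProdFinEquiv (i, i'), by simp [hi, hi']⟩
  · rintro ⟨i, hi, hi'⟩
    exact ⟨⟨_, hi⟩, ⟨_, hi'⟩⟩

variable [IsStrictTotalOrder X r]

lemma compl_convex {S : Set X} (h : IsRConvex r S) : UnionOfAtMostConvex r 2 Sᶜ := by
  classical
  refine ⟨![{x | ∀ c ∈ S, r x c}, {x | ∀ c ∈ S, r c x}], ?_, ?_⟩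
  · intro i
    fin_cases i
    · intro a b c hab hbc ha hc d hd
      exact trans_of r hbc (hc d hd)
    · intro a b c hab hbc ha hc d hd
      exact trans_of r (ha d hd) hab
  · ext x
    simp only [Set.mem_compl_iff, Set.mem_iUnion, Fin.exists_fin_two]
    constructor
    · intro hx
      by_cases h1 : ∀ c ∈ S, r x c
      · exact Or.inl h1
      · refine Or.inr ?_
        push_neg at h1
        obtain ⟨c1, hc1, hrc1⟩ := h1
        have hc1x : r c1 x := by
          rcases trichotomous_of r x c1 with h' | h' | h'
          · exact absurd h' hrc1
          · exact absurd (h' ▸ hc1) hx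
          · exact h'
        intro d hd
        rcases trichotomous_of r d x with h' | h' | h'
        · exact h'
        · exact absurd (h' ▸ hd) hx
        · exact absurd (h c1 x d hc1x h' hc1 hd) hx
    · rintro (hx | hx) hxS
      · exact irrefl_of r x (hx x hxS)
      · exact irrefl_of r x (hx x hxS)

lemma uamc_compl {S : Set X} {k : ℕ} (h : UnionOfAtMostConvex r k S) :
    UnionOfAtMostConvex r (2 ^ k) Sᶜ := by
  induction k generalizing S with
  | zero =>
    obtain ⟨C, _, hU⟩ := h
    have : S = ∅ := by rw [hU]; simp
    rw [this, Set.compl_empty]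
    refine uamc_of_convex fun a b c _ _ _ _ => trivial
  | succ k ih =>
    obtain ⟨C, hC, hU⟩ := h
    have hS : S = C (Fin.last k) ∪ ⋃ i : Fin k, C i.castSucc := by
      rw [hU]
      ext x
      simp only [Set.mem_iUnion, Set.mem_union]
      constructor
      · rintro ⟨i, hi⟩
        rcases Fin.eq_castSucc_or_eq_last i with ⟨j, rfl⟩ | rfl
        · exact Or.inr ⟨j, hi⟩
        · exact Or.inl hi
      · rintro (hi | ⟨i, hi⟩)
        · exact ⟨_, hi⟩
        · exact ⟨_, hi⟩
    have h1 : UnionOfAtMostConvex r (2 ^ k) (⋃ i : Fin k, C i.castSucc)ᶜ :=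
      ih ⟨fun i => C i.castSucc, fun i => hC _, rfl⟩
    have h2 := compl_convex (hC (Fin.last k))
    have := uamc_inter h2 h1
    rw [hS, Set.compl_union]
    exact uamc_mono this (by rw [pow_succ]; ring_nf; exact le_rfl)

def Alt (r : X → X → Prop) (S : Set X) (k : ℕ) : Prop :=
  ∃ (a : Fin (k+1) → X) (c : Fin k → X),
    (∀ i : Fin k, r (a i.castSucc) (c i) ∧ r (c i) (a i.succ)) ∧
    (∀ i, a i ∈ S) ∧ (∀ i, c i ∉ S)

section STO
variable [IsStrictTotalOrder X r]

lemma not_alt_of_uamc {S : Set X} {K : ℕ} (h : UnionOfAtMostConvex r K S) :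
    ¬ Alt r S K := by
  classical
  rintro ⟨a, c, hadj, haS, hcS⟩
  obtain ⟨C, hC, hU⟩ := h
  have hchain : ∀ (i : Fin K) (n : ℕ) (hn : n < K + 1), (i : ℕ) < n →
      r (c i) (a ⟨n, hn⟩) := by
    intro i n
    induction n with
    | zero => omega
    | succ n ih =>
      intro hn hin
      rcases Nat.lt_or_ge (i : ℕ) n with h' | h'
      · have hn' : n < K + 1 := by omega
        have h1 := ih hn' h'
        have hnK : n < K := by omega
        have h2 : r (a ⟨n, hn'⟩) (c ⟨n, hnK⟩) := by
          have := (hadj ⟨n, hnK⟩).1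
          exact this
        have h3 : r (c ⟨n, hnK⟩) (a ⟨n + 1, hn⟩) := by
          have := (hadj ⟨n, hnK⟩).2
          exact this
        exact trans_of r (trans_of r h1 h2) h3
      · have hin' : (i : ℕ) = n := by omega
        have hsucc : i.succ = ⟨n + 1, hn⟩ := Fin.ext (by simp [hin'])
        have := (hadj i).2
        rwa [hsucc] at this
  -- pigeonhole
  have hmem : ∀ i, a i ∈ ⋃ j, C j := fun i => hU ▸ haS i
  have hg : ∀ i, ∃ j, a i ∈ C j := by
    intro i; simpa [Set.mem_iUnion] using hmem i
  choose g hgmem using hg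
  have hcard : Fintype.card (Fin K) < Fintype.card (Fin (K+1)) := by simp
  obtain ⟨i, j, hij, hgij⟩ := Fintype.exists_ne_map_eq_of_card_lt g hcard
  wlog hlt : i < j generalizing i j
  · exact this j i hij.symm hgij.symm ((hij.lt_or_gt).resolve_left hlt)
  have hiK : (i : ℕ) < K := by omega
  set i' : Fin K := ⟨i, hiK⟩ with hi'
  have hai : a i = a i'.castSucc := by congr 1
  have h1 : r (a i) (c i') := by rw [hai]; exact (hadj i').1
  have h2 : r (c i') (a j) := by
    have := hchain i' (j : ℕ) j.2 (by simpa [hi'] using hlt)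
    convert this using 2
  have := hC (g i) (a i) (c i') (a j) h1 h2 (hgmem i) (hgij ▸ hgmem j)
  exact hcS i' (hU ▸ Set.mem_iUnion.2 ⟨g i, this⟩)

end STO

def seg (r : X → X → Prop) (a b : X) : Set X :=
  {c | c = a ∨ c = b ∨ (r a c ∧ r c b) ∨ (r b c ∧ r c a)}

def equ (r : X → X → Prop) (S : Set X) (a b : X) : Prop :=
  a ∈ S ∧ b ∈ S ∧ seg r a b ⊆ S

lemma seg_symm (a b : X) : seg r a b = seg r b a := by
  ext c; simp only [seg, Set.mem_setOf_eq]; tauto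

section STO2
variable [IsStrictTotalOrder X r]

lemma mem_seg_split {a b c : X} (hc : c ∈ seg r a b) (d : X) :
    c ∈ seg r a d ∨ c ∈ seg r d b := by
  rcases hc with rfl | rfl | ⟨h1, h2⟩ | ⟨h1, h2⟩
  · exact Or.inl (Or.inl rfl)
  · exact Or.inr (Or.inr (Or.inl rfl))
  · rcases trichotomous_of r c d with h | h | h
    · exact Or.inl (Or.inr (Or.inr (Or.inl ⟨h1, h⟩)))
    · exact Or.inr (Or.inl h)
    · exact Or.inr (Or.inr (Or.inr (Or.inl ⟨h, h2⟩)))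
  · rcases trichotomous_of r c d with h | h | h
    · exact Or.inr (Or.inr (Or.inr (Or.inr ⟨h1, h⟩)))
    · exact Or.inr (Or.inl h)
    · exact Or.inl (Or.inr (Or.inr (Or.inr ⟨h, h2⟩)))

variable {S : Set X}

lemma equ_symm {a b : X} (h : equ r S a b) : equ r S b a :=
  ⟨h.2.1, h.1, by rw [seg_symm]; exact h.2.2⟩

lemma equ_trans {a b d : X} (h1 : equ r S a b) (h2 : equ r S b d) : equ r S a d :=
  ⟨h1.1, h2.2.1, fun c hc => (mem_seg_split hc b).elim (fun h => h1.2.2 h) fun h => h2.2.2 h⟩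

def piece (r : X → X → Prop) (S : Set X) (a : X) : Set X := {b | equ r S a b}

lemma piece_eq {a b : X} (h : equ r S a b) : piece r S a = piece r S b := by
  ext x
  exact ⟨fun hx => equ_trans (equ_symm h) hx, fun hx => equ_trans h hx⟩

lemma piece_subset (a : X) : piece r S a ⊆ S := fun _ h => h.2.1

lemma piece_convex (a : X) : IsRConvex r (piece r S a) := by
  intro p q t hpq hqt hp ht
  have hqseg : q ∈ seg r p t := Or.inr (Or.inr (Or.inl ⟨hpq, hqt⟩))
  have hsegpt : seg r p t ⊆ S := by
    intro c hc
    rcases mem_seg_split hc a with h' | h'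
    · exact hp.2.2 (by rwa [seg_symm] at h')
    · exact ht.2.2 h'
  refine ⟨hp.1, hsegpt hqseg, fun c hc => ?_⟩
  rcases mem_seg_split hc p with h' | h'
  · exact hp.2.2 h'
  · apply hsegpt
    rcases h' with rfl | rfl | ⟨h1, h2⟩ | ⟨h1, h2⟩
    · exact Or.inl rfl
    · exact hqseg
    · exact Or.inr (Or.inr (Or.inl ⟨h1, trans_of r h2 hqt⟩))
    · exact absurd (trans_of r (trans_of r hpq h1) h2) (irrefl_of r p)

lemma uamc_of_not_alt {K : ℕ} (h : ¬ Alt r S K) : UnionOfAtMostConvex r K S := by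
  classical
  letI lo : LinearOrder X := linearOrderOfSTO r
  have hlt : ∀ x y : X, x < y ↔ r x y := fun x y => Iff.rfl
  -- every finset of pieces has card ≤ K
  have hbound : ∀ t : Finset (Set X), ↑t ⊆ piece r S '' S → t.card ≤ K := by
    intro t ht
    by_contra hK
    push_neg at hK
    obtain ⟨u, hut, hcard⟩ := Finset.exists_subset_card_eq hK
    -- choose representatives
    have hrep : ∀ P : {P // P ∈ u}, ∃ x, x ∈ S ∧ piece r S x = (P : Set X) := by
      rintro ⟨P, hP⟩
      obtain ⟨x, hx, hPx⟩ := ht (hut hP)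
      exact ⟨x, hx, hPx⟩
    choose rep hrepS hrepP using hrep
    have hrepinj : Function.Injective rep := by
      intro P Q hPQ
      have : (P : Set X) = Q := by rw [← hrepP P, ← hrepP Q, hPQ]
      exact Subtype.ext this
    set v : Finset X := Finset.univ.image rep with hv
    have hvcard : v.card = K + 1 := by
      rw [hv, Finset.card_image_of_injective _ hrepinj]
      simp [hcard]
    -- sort v
    have hvS : ∀ x ∈ v, x ∈ S := by
      intro x hx
      rw [hv] at hx
      obtain ⟨P, _, rfl⟩ := Finset.mem_image.1 hx
      exact hrepS P
    have hvnequ : ∀ x ∈ v, ∀ y ∈ v, x ≠ y → ¬ equ r S x y := by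
      intro x hx y hy hxy hequ
      rw [hv] at hx hy
      obtain ⟨P, _, rfl⟩ := Finset.mem_image.1 hx
      obtain ⟨Q, _, rfl⟩ := Finset.mem_image.1 hy
      have : piece r S (rep P) = piece r S (rep Q) := piece_eq hequ
      rw [hrepP P, hrepP Q] at this
      exact hxy (congrArg rep (Subtype.ext this))
    set w : Fin (K + 1) → X := fun i => v.orderEmbOfFin hvcard i with hw
    have hwmem : ∀ i, w i ∈ v := fun i => v.orderEmbOfFin_mem hvcard i
    have hwlt : ∀ i j : Fin (K + 1), i < j → r (w i) (w j) := by
      intro i j hij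
      exact (v.orderEmbOfFin hvcard).strictMono hij
    -- choose bad points between consecutive ones
    have hbad : ∀ i : Fin K, ∃ c, r (w i.castSucc) c ∧ r c (w i.succ) ∧ c ∉ S := by
      intro i
      have hne : w i.castSucc ≠ w i.succ := by
        intro h
        have := hwlt i.castSucc i.succ (Fin.castSucc_lt_succ)
        rw [h] at this
        exact irrefl_of r _ this
      have hnequ := hvnequ _ (hwmem i.castSucc) _ (hwmem i.succ) hne
      have hord := hwlt i.castSucc i.succ (Fin.castSucc_lt_succ)
      rw [equ] at hnequ
      push_neg at hnequ
      obtain ⟨c, hcseg, hcS⟩ := Set.not_subset.1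
        (hnequ (hvS _ (hwmem i.castSucc)) (hvS _ (hwmem i.succ)))
      rcases hcseg with rfl | rfl | ⟨h1, h2⟩ | ⟨h1, h2⟩
      · exact absurd (hvS _ (hwmem i.castSucc)) hcS
      · exact absurd (hvS _ (hwmem i.succ)) hcS
      · exact ⟨c, h1, h2, hcS⟩
      · exact absurd (trans_of r (trans_of r hord h1) h2) (irrefl_of r _)
    choose cc hc1 hc2 hc3 using hbad
    exact h ⟨w, cc, fun i => ⟨hc1 i, hc2 i⟩, fun i => hvS _ (hwmem i), hc3⟩
  -- now assemble the convex decomposition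
  have hfin : (piece r S '' S).Finite := by
    by_contra hinf
    obtain ⟨t, htsub, htcard⟩ := Set.Infinite.exists_subset_card_eq hinf (K + 1)
    have := hbound t htsub
    omega
  have hcardK : hfin.toFinset.card ≤ K := hbound _ (by simp)
  have hlen : hfin.toFinset.toList.length ≤ K := by
    rw [Finset.length_toList]; exact hcardK
  have hgetmem : ∀ (n : ℕ) (hn : n < hfin.toFinset.toList.length),
      ∃ x ∈ S, hfin.toFinset.toList.get ⟨n, hn⟩ = piece r S x := by
    intro n hn
    have hmem : hfin.toFinset.toList.get ⟨n, hn⟩ ∈ hfin.toFinset :=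
      Finset.mem_toList.1 (List.get_mem _ _)
    obtain ⟨x, hx, hx2⟩ := hfin.mem_toFinset.1 hmem
    exact ⟨x, hx, hx2.symm⟩
  refine ⟨fun i => if h : (i : ℕ) < hfin.toFinset.toList.length
      then hfin.toFinset.toList.get ⟨i, h⟩ else ∅, fun i => ?_, ?_⟩
  · dsimp only
    split
    case isTrue h' =>
      obtain ⟨x, _, hx⟩ := hgetmem i h'
      rw [hx]
      exact piece_convex x
    case isFalse => exact fun _ _ _ _ _ h _ => h.elim
  · ext x
    simp only [Set.mem_iUnion]
    constructor
    · intro hx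
      have hmem : piece r S x ∈ hfin.toFinset.toList :=
        Finset.mem_toList.2 (hfin.mem_toFinset.2 ⟨x, hx, rfl⟩)
      obtain ⟨n, hn⟩ := List.mem_iff_get.1 hmem
      refine ⟨⟨n, lt_of_lt_of_le n.2 hlen⟩, ?_⟩
      have hn2 : (n : ℕ) < hfin.toFinset.toList.length := n.2
      simp only [hn2, dif_pos]
      rw [show (⟨(n : ℕ), hn2⟩ : Fin _) = n from Fin.ext rfl, hn]
      refine ⟨hx, hx, ?_⟩
      intro c hc
      rcases hc with rfl | rfl | ⟨h1, h2⟩ | ⟨h1, h2⟩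
      · exact hx
      · exact hx
      · exact absurd (trans_of r h1 h2) (irrefl_of r x)
      · exact absurd (trans_of r h1 h2) (irrefl_of r x)
    · rintro ⟨i, hi⟩
      by_cases h' : (i : ℕ) < hfin.toFinset.toList.length
      · rw [dif_pos h'] at hi
        obtain ⟨y, _, hy⟩ := hgetmem i h'
        rw [hy] at hi
        exact piece_subset _ hi
      · rw [dif_neg h'] at hi
        exact hi.elim


end STO2
lemma finOrder {M : Type*} : ∀ (n : ℕ) (s : Finset M), s.card ≤ n → ∀ (ℬ : Set (Set M)),
    (∀ B ∈ ℬ, B ⊆ ↑s) → (∀ B ∈ ℬ, ∀ C ∈ ℬ, B ⊆ C ∨ C ⊆ B ∨ B ∩ C = ∅) →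
    ∃ f : M → ℕ, Set.InjOn f ↑s ∧ (∀ x ∈ s, f x < s.card) ∧
      ∀ B ∈ ℬ, ∀ a ∈ s, ∀ b ∈ s, ∀ c ∈ s,
        f a < f b → f b < f c → a ∈ B → c ∈ B → b ∈ B := by
  classical
  intro n
  induction n with
  | zero =>
    intro s hs ℬ hsub hlam
    refine ⟨fun _ => 0, ?_, ?_, ?_⟩
    · have : s = ∅ := Finset.card_eq_zero.1 (Nat.le_zero.1 hs)
      subst this; simp [Set.InjOn]
    · intro x hx
      have : s = ∅ := Finset.card_eq_zero.1 (Nat.le_zero.1 hs)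
      subst this; simp at hx
    · intro B _ a ha
      have : s = ∅ := Finset.card_eq_zero.1 (Nat.le_zero.1 hs)
      subst this; simp at ha
  | succ n ih =>
    intro s hs ℬ hsub hlam
    set ℬ' : Set (Set M) := {B ∈ ℬ | B.Nonempty ∧ ¬ (↑s : Set M) ⊆ B} with hℬ'
    by_cases hne : ℬ'.Nonempty
    · -- find maximal element
      have hfin : ℬ'.Finite := by
        apply Set.Finite.subset (Set.Finite.finite_subsets s.finite_toSet)
        intro B hB
        exact hsub B hB.1
      obtain ⟨B, hBmem, hBmax⟩ := Set.Finite.exists_maximalFor id ℬ' hfin hne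
      obtain ⟨hBℬ, hBne, hBns⟩ := hBmem
      set sB : Finset M := s.filter (· ∈ B) with hsB
      have hcoesB : (↑sB : Set M) = B := by
        ext x
        simp only [hsB, Finset.coe_filter, Set.mem_setOf_eq, Finset.mem_filter]
        exact ⟨fun h => h.2, fun h => ⟨Finset.mem_coe.1 (hsub B hBℬ h), h⟩⟩
      have hsBsub : sB ⊆ s := Finset.filter_subset _ _
      have hx0 : ∃ p ∈ s, p ∉ B := by
        by_contra h
        push_neg at h
        exact hBns h
      obtain ⟨p, hp, hpB⟩ := hx0
      have hsBlt : sB.card < s.card := by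
        apply Finset.card_lt_card
        refine ⟨hsBsub, fun h => hpB ?_⟩
        have := h hp
        rw [← hcoesB]
        exact this
      obtain ⟨q, hqB⟩ := hBne
      have hqs : q ∈ s := hsub B hBℬ hqB
      have hqsB : q ∈ sB := by rw [hsB, Finset.mem_filter]; exact ⟨hqs, hqB⟩
      have hsdlt : (s \ sB).card < s.card := by
        apply Finset.card_lt_card
        refine ⟨Finset.sdiff_subset, fun h => ?_⟩
        have := h hqs
        simp only [Finset.mem_sdiff] at this
        exact this.2 hqsB
      -- recurse
      obtain ⟨f₁, hf₁inj, hf₁lt, hf₁cvx⟩ := ih sB (by omega) {C ∈ ℬ | C ⊆ B}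
        (fun C hC => by rw [hcoesB]; exact hC.2)
        (fun C hC D hD => hlam C hC.1 D hD.1)
      obtain ⟨f₂, hf₂inj, hf₂lt, hf₂cvx⟩ := ih (s \ sB) (by omega)
        {C ∈ ℬ | C ⊆ ↑(s \ sB)}
        (fun C hC => hC.2)
        (fun C hC D hD => hlam C hC.1 D hD.1)
      refine ⟨fun x => if x ∈ sB then f₁ x else f₂ x + sB.card, ?_, ?_, ?_⟩
      · intro x hx y hy hxy
        dsimp only at hxy
        by_cases hxB : x ∈ sB <;> by_cases hyB : y ∈ sB
        · rw [if_pos hxB, if_pos hyB] at hxy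
          exact hf₁inj (by exact_mod_cast hxB) (by exact_mod_cast hyB) hxy
        · rw [if_pos hxB, if_neg hyB] at hxy
          have := hf₁lt x hxB
          omega
        · rw [if_neg hxB, if_pos hyB] at hxy
          have := hf₁lt y hyB
          omega
        · rw [if_neg hxB, if_neg hyB] at hxy
          have hx2 : x ∈ s \ sB := Finset.mem_sdiff.2 ⟨hx, hxB⟩
          have hy2 : y ∈ s \ sB := Finset.mem_sdiff.2 ⟨hy, hyB⟩
          exact hf₂inj (by exact_mod_cast hx2) (by exact_mod_cast hy2) (by omega)
      · intro x hx
        have hcards : (s \ sB).card + sB.card = s.card := by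
          rw [Finset.card_sdiff_add_card_eq_card hsBsub]
        dsimp only
        by_cases hxB : x ∈ sB
        · rw [if_pos hxB]
          have := hf₁lt x hxB
          omega
        · rw [if_neg hxB]
          have := hf₂lt x (Finset.mem_sdiff.2 ⟨hx, hxB⟩)
          omega
      · intro B' hB' a ha b hb c hc hab hbc haB' hcB'
        dsimp only at hab hbc
        -- cases on B'
        by_cases hsB' : (↑s : Set M) ⊆ B'
        · exact hsB' hb
        · have hB'ne : B'.Nonempty := ⟨a, haB'⟩
          have hB'mem : B' ∈ ℬ' := ⟨hB', hB'ne, hsB'⟩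
          rcases hlam B' hB' B hBℬ with hsub' | hsup' | hdis
          · -- B' ⊆ B
            have haB : a ∈ sB := by
              rw [hsB, Finset.mem_filter]; exact ⟨ha, hsub' haB'⟩
            have hcB : c ∈ sB := by
              rw [hsB, Finset.mem_filter]; exact ⟨hc, hsub' hcB'⟩
            rw [if_pos haB] at hab
            rw [if_pos hcB] at hbc
            have hbB : b ∈ sB := by
              by_contra hbB
              rw [if_neg hbB] at hab hbc
              have := hf₁lt a haB
              have := hf₁lt c hcB
              omega
            rw [if_pos hbB] at hab hbc
            exact hf₁cvx B' ⟨hB', hsub'⟩ a haB b hbB c hcB hab hbc haB' hcB'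
          · -- B ⊆ B', so B = B' by maximality
            have : B = B' := le_antisymm hsup' (hBmax hB'mem hsup')
            subst this
            have haB : a ∈ sB := by rw [hsB, Finset.mem_filter]; exact ⟨ha, haB'⟩
            have hcB : c ∈ sB := by rw [hsB, Finset.mem_filter]; exact ⟨hc, hcB'⟩
            rw [if_pos haB] at hab
            rw [if_pos hcB] at hbc
            have hbB : b ∈ sB := by
              by_contra hbB
              rw [if_neg hbB] at hab hbc
              have := hf₁lt a haB
              have := hf₁lt c hcB
              omega
            rw [← hcoesB]
            exact hbB
          · -- disjoint
            have hB'sd : B' ⊆ ↑(s \ sB) := by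
              intro x hx
              rw [Finset.coe_sdiff, hcoesB]
              refine ⟨hsub B' hB' hx, fun hxB => ?_⟩
              have : x ∈ B' ∩ B := ⟨hx, hxB⟩
              rw [hdis] at this
              exact this
            have haB : a ∉ sB := by
              intro h
              have : a ∈ B' ∩ B := ⟨haB', by rw [← hcoesB]; exact h⟩
              rw [hdis] at this
              exact this
            have hcB : c ∉ sB := by
              intro h
              have : c ∈ B' ∩ B := ⟨hcB', by rw [← hcoesB]; exact h⟩
              rw [hdis] at this
              exact this
            rw [if_neg haB] at hab
            rw [if_neg hcB] at hbc
            have hbB : b ∉ sB := by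
              intro hbB
              rw [if_pos hbB] at hab
              have := hf₁lt b hbB
              omega
            rw [if_neg hbB] at hab hbc
            exact hf₂cvx B' ⟨hB', hB'sd⟩ a (Finset.mem_sdiff.2 ⟨ha, haB⟩) b
              (Finset.mem_sdiff.2 ⟨hb, hbB⟩) c (Finset.mem_sdiff.2 ⟨hc, hcB⟩)
              (by omega) (by omega) haB' hcB'
    · -- no nonempty proper set
      obtain ⟨e⟩ : Nonempty (↥s ≃ Fin s.card) := ⟨s.equivFin⟩
      refine ⟨fun x => if h : x ∈ s then (e ⟨x, h⟩ : ℕ) else 0, ?_, ?_, ?_⟩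
      · intro x hx y hy hxy
        simp only [dif_pos (Finset.mem_coe.1 hx), dif_pos (Finset.mem_coe.1 hy)] at hxy
        have := e.injective (Fin.ext hxy)
        exact Subtype.ext_iff.1 this
      · intro x hx
        simp only [dif_pos hx]
        exact (e ⟨x, hx⟩).2
      · intro B hB a ha b hb c hc hab hbc haB hcB
        by_cases hsB' : (↑s : Set M) ⊆ B
        · exact hsB' hb
        · exact absurd (⟨B, hB, ⟨a, haB⟩, hsB'⟩ : ℬ'.Nonempty) hne

universe u v

variable {L : FirstOrder.Language.{u, v}} {Φ : Set ((m : ℕ) × L.Formula (Unit ⊕ Fin m))}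

inductive Tmpl (L : FirstOrder.Language.{u, v}) (Φ : Set ((m : ℕ) × L.Formula (Unit ⊕ Fin m))) :
    Type (max u v) where
  | base : (p : (m : ℕ) × L.Formula (Unit ⊕ Fin m)) → p ∈ Φ → Tmpl L Φ
  | compl : Tmpl L Φ → Tmpl L Φ
  | union : Tmpl L Φ → Tmpl L Φ → Tmpl L Φ
  | inter : Tmpl L Φ → Tmpl L Φ → Tmpl L Φ

namespace Tmpl

def ar : Tmpl L Φ → ℕ
  | base p _ => p.1
  | compl t => t.ar
  | union t₁ t₂ => t₁.ar + t₂.ar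
  | inter t₁ t₂ => t₁.ar + t₂.ar

def bnd : Tmpl L Φ → ℕ
  | base _ _ => 2
  | compl t => 2 ^ t.bnd
  | union t₁ t₂ => t₁.bnd + t₂.bnd
  | inter t₁ t₂ => t₁.bnd * t₂.bnd

def eval {X P : Type*}
    (g : ∀ p : (m : ℕ) × L.Formula (Unit ⊕ Fin m), p ∈ Φ → (Fin p.1 → P) → Set X) :
    (t : Tmpl L Φ) → (Fin t.ar → P) → Set X
  | base p hp, d => g p hp d
  | compl t, d => (t.eval g d)ᶜ
  | union t₁ t₂, d => t₁.eval g (d ∘ Fin.castAdd t₂.ar) ∪ t₂.eval g (d ∘ Fin.natAdd t₁.ar)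
  | inter t₁ t₂, d => t₁.eval g (d ∘ Fin.castAdd t₂.ar) ∩ t₂.eval g (d ∘ Fin.natAdd t₁.ar)

noncomputable def toFormula : (t : Tmpl L Φ) → L.Formula (Unit ⊕ Fin t.ar)
  | base p _ => p.2
  | compl t => t.toFormula.not
  | union t₁ t₂ =>
      (t₁.toFormula.relabel (Sum.map id (Fin.castAdd t₂.ar))) ⊔
        (t₂.toFormula.relabel (Sum.map id (Fin.natAdd t₁.ar)))
  | inter t₁ t₂ =>
      (t₁.toFormula.relabel (Sum.map id (Fin.castAdd t₂.ar))) ⊓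
        (t₂.toFormula.relabel (Sum.map id (Fin.natAdd t₁.ar)))

variable {M : Type*} [L.Structure M]

lemma realizeSet_sup {m : ℕ} (φ ψ : L.Formula (Unit ⊕ Fin m)) (d : Fin m → M) :
    realizeSet L M (φ ⊔ ψ) d = realizeSet L M φ d ∪ realizeSet L M ψ d := by
  ext x; simp [realizeSet, Formula.realize_sup]

lemma realizeSet_inf {m : ℕ} (φ ψ : L.Formula (Unit ⊕ Fin m)) (d : Fin m → M) :
    realizeSet L M (φ ⊓ ψ) d = realizeSet L M φ d ∩ realizeSet L M ψ d := by
  ext x; simp [realizeSet, Formula.realize_inf]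

lemma realizeSet_not {m : ℕ} (φ : L.Formula (Unit ⊕ Fin m)) (d : Fin m → M) :
    realizeSet L M φ.not d = (realizeSet L M φ d)ᶜ := by
  ext x; simp [realizeSet, Formula.realize_not]

lemma realizeSet_castAdd {a c : ℕ} (φ : L.Formula (Unit ⊕ Fin a)) (d : Fin (a + c) → M) :
    realizeSet L M (φ.relabel (Sum.map id (Fin.castAdd c))) d
      = realizeSet L M φ (d ∘ Fin.castAdd c) := by
  ext x
  simp only [realizeSet, Set.mem_setOf_eq, Formula.realize_relabel]
  have : (Sum.elim (fun _ : Unit => x) d ∘ Sum.map id (Fin.castAdd c))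
      = Sum.elim (fun _ : Unit => x) (d ∘ Fin.castAdd c) :=
    funext fun i => by rcases i with i | i <;> rfl
  rw [this]

lemma realizeSet_natAdd {a c : ℕ} (φ : L.Formula (Unit ⊕ Fin c)) (d : Fin (a + c) → M) :
    realizeSet L M (φ.relabel (Sum.map id (Fin.natAdd a))) d
      = realizeSet L M φ (d ∘ Fin.natAdd a) := by
  ext x
  simp only [realizeSet, Set.mem_setOf_eq, Formula.realize_relabel]
  have : (Sum.elim (fun _ : Unit => x) d ∘ Sum.map id (Fin.natAdd a))
      = Sum.elim (fun _ : Unit => x) (d ∘ Fin.natAdd a) :=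
    funext fun i => by rcases i with i | i <;> rfl
  rw [this]

lemma realize_toFormula (t : Tmpl L Φ) (d : Fin t.ar → M) :
    realizeSet L M t.toFormula d = t.eval (fun p _ b => realizeSet L M p.2 b) d := by
  induction t with
  | base p hp => rfl
  | compl t ih =>
    show realizeSet L M t.toFormula.not d = (t.eval _ d)ᶜ
    exact (realizeSet_not t.toFormula d).trans (congrArg (fun s : Set M => sᶜ) (ih d))
  | union t₁ t₂ ih₁ ih₂ =>
    show realizeSet L M (_ ⊔ _) d = _ ∪ _
    exact (realizeSet_sup _ _ d).trans (congrArg₂ (· ∪ ·)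
      ((realizeSet_castAdd (c := t₂.ar) t₁.toFormula d).trans (ih₁ _))
      ((realizeSet_natAdd (a := t₁.ar) t₂.toFormula d).trans (ih₂ _)))
  | inter t₁ t₂ ih₁ ih₂ =>
    show realizeSet L M (_ ⊓ _) d = _ ∩ _
    exact (realizeSet_inf _ _ d).trans (congrArg₂ (· ∩ ·)
      ((realizeSet_castAdd (c := t₂.ar) t₁.toFormula d).trans (ih₁ _))
      ((realizeSet_natAdd (a := t₁.ar) t₂.toFormula d).trans (ih₂ _)))

lemma eval_preimage {X Y P : Type*} (h : X → Y)
    (g : ∀ p : (m : ℕ) × L.Formula (Unit ⊕ Fin m), p ∈ Φ → (Fin p.1 → P) → Set Y)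
    (t : Tmpl L Φ) (d : Fin t.ar → P) :
    h ⁻¹' (t.eval g d) = t.eval (fun p hp b => h ⁻¹' (g p hp b)) d := by
  induction t with
  | base p hp => rfl
  | compl t ih => simp only [eval, Set.preimage_compl]; exact congrArg (fun s : Set X => sᶜ) (ih d)
  | union t₁ t₂ ih₁ ih₂ => simp only [eval, Set.preimage_union, ih₁, ih₂]
  | inter t₁ t₂ ih₁ ih₂ => simp only [eval, Set.preimage_inter, ih₁, ih₂]

lemma genBoolAlg_exists {M : Type*} [L.Structure M] {S : Set M}
    (h : GenBoolAlg {S : Set M | ∃ p ∈ Φ, ∃ c : Fin p.1 → M, S = realizeSet L M p.2 c} S) :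
    ∃ (t : Tmpl L Φ) (d : Fin t.ar → M),
      S = t.eval (fun p _ b => realizeSet L M p.2 b) d := by
  induction h with
  | base hA =>
    obtain ⟨p, hp, c, rfl⟩ := hA
    exact ⟨Tmpl.base p hp, c, rfl⟩
  | compl _ ih =>
    obtain ⟨t, d, rfl⟩ := ih
    exact ⟨t.compl, d, rfl⟩
  | union _ _ ih₁ ih₂ =>
    obtain ⟨t₁, d₁, rfl⟩ := ih₁
    obtain ⟨t₂, d₂, rfl⟩ := ih₂
    refine ⟨t₁.union t₂, Fin.append d₁ d₂, ?_⟩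
    show _ = eval _ _ _ ∪ eval _ _ _
    exact congrArg₂ (· ∪ ·)
      (congrArg (eval (fun p _ b => realizeSet L M p.2 b) t₁)
        (funext fun i => Fin.append_left d₁ d₂ i).symm)
      (congrArg (eval (fun p _ b => realizeSet L M p.2 b) t₂)
        (funext fun i => Fin.append_right d₁ d₂ i).symm)
  | inter _ _ ih₁ ih₂ =>
    obtain ⟨t₁, d₁, rfl⟩ := ih₁
    obtain ⟨t₂, d₂, rfl⟩ := ih₂
    refine ⟨t₁.inter t₂, Fin.append d₁ d₂, ?_⟩
    show _ = eval _ _ _ ∩ eval _ _ _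
    exact congrArg₂ (· ∩ ·)
      (congrArg (eval (fun p _ b => realizeSet L M p.2 b) t₁)
        (funext fun i => Fin.append_left d₁ d₂ i).symm)
      (congrArg (eval (fun p _ b => realizeSet L M p.2 b) t₂)
        (funext fun i => Fin.append_right d₁ d₂ i).symm)

end Tmpl


section Chi
universe u' v'
variable {L : FirstOrder.Language.{u', v'}} {M : Type*} [L.Structure M]

noncomputable def chi {m : ℕ} (ψ : L.Formula (Unit ⊕ Fin m)) {a : ℕ}
    (θ : L.Formula (Unit ⊕ Fin a)) : L.Formula (Fin m) :=
  (((((ψ.relabel (Sum.map id Sum.inl)).iff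
      (θ.relabel (Sum.map id Sum.inr))).relabel Sum.swap).iAlls Unit).iExs (Fin a))

lemma realize_chi {m a : ℕ} (ψ : L.Formula (Unit ⊕ Fin m)) (θ : L.Formula (Unit ⊕ Fin a))
    (b : Fin m → M) :
    (chi ψ θ).Realize b ↔
      ∃ d : Fin a → M, realizeSet L M ψ b = realizeSet L M θ d := by
  rw [chi, Formula.realize_iExs]
  apply exists_congr
  intro d
  rw [Formula.realize_iAlls]
  constructor
  · intro h
    ext y
    have := h (fun _ => y)
    simp only [Formula.realize_relabel, Formula.realize_iff] at this
    simp only [realizeSet, Set.mem_setOf_eq]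
    convert this using 2 <;>
      · funext i; rcases i with i | i <;> rfl
  · intro h x
    simp only [Formula.realize_relabel, Formula.realize_iff]
    have := Set.ext_iff.1 h (x ())
    simp only [realizeSet, Set.mem_setOf_eq] at this
    convert this using 2 <;>
      · funext i; rcases i with i | i <;> rfl

end Chi

lemma sto_pullback {X Y : Type*} [LinearOrder Y] {g : X → Y} (hg : Function.Injective g) :
    IsStrictTotalOrder X (fun a b => g a < g b) :=
  { trichotomous := fun a b h1 h2 => hg (le_antisymm (not_lt.1 h2) (not_lt.1 h1))
    irrefl := fun a => lt_irrefl _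
    trans := fun a b c hab hbc => lt_trans hab hbc }

lemma uamc_eval {L : FirstOrder.Language} {Φ : Set ((m : ℕ) × L.Formula (Unit ⊕ Fin m))}
    {X P : Type*} {r : X → X → Prop} [IsStrictTotalOrder X r]
    (g : ∀ p : (m : ℕ) × L.Formula (Unit ⊕ Fin m), p ∈ Φ → (Fin p.1 → P) → Set X)
    (hg : ∀ p hp bb, UnionOfAtMostConvex r 2 (g p hp bb)) :
    ∀ (t : Tmpl L Φ) (d : Fin t.ar → P), UnionOfAtMostConvex r t.bnd (t.eval g d) := by
  intro t
  induction t with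
  | base p hp => exact fun d => hg p hp d
  | compl t ih => exact fun d => uamc_compl (ih d)
  | union t₁ t₂ ih₁ ih₂ => exact fun d => uamc_union (ih₁ _) (ih₂ _)
  | inter t₁ t₂ ih₁ ih₂ => exact fun d => uamc_inter (ih₁ _) (ih₂ _)


lemma key_stage {M : Type*} (𝒜 : Set (Set M)) (hind : IndepDimLEOne 𝒜) (s : Finset M) :
    ∃ f : M → ℕ, Set.InjOn f ↑s ∧ ∀ A ∈ 𝒜,
      (∀ a ∈ s, ∀ b ∈ s, ∀ c ∈ s, f a < f b → f b < f c → a ∈ A → c ∈ A → b ∈ A) ∨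
      (∀ a ∈ s, ∀ b ∈ s, ∀ c ∈ s, f a < f b → f b < f c → a ∉ A → c ∉ A → b ∉ A) := by
  classical
  rcases s.eq_empty_or_nonempty with rfl | ⟨p, hp⟩
  · refine ⟨fun _ => 0, by simp [Set.InjOn], fun A _ => Or.inl ?_⟩
    intro a ha
    simp at ha
  · set ℬs : Set (Set M) :=
      {B | ∃ A ∈ 𝒜, B = if p ∈ A then (↑s : Set M) \ A else A ∩ ↑s} with hℬs
    have hsub : ∀ B ∈ ℬs, B ⊆ ↑s := by
      rintro B ⟨A, hA, rfl⟩
      split_ifs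
      · exact Set.diff_subset
      · exact Set.inter_subset_right
    have hlam : ∀ B ∈ ℬs, ∀ C ∈ ℬs, B ⊆ C ∨ C ⊆ B ∨ B ∩ C = ∅ := by
      rintro B ⟨A, hA, rfl⟩ C ⟨A', hA', rfl⟩
      by_cases hpA : p ∈ A
      · by_cases hpA' : p ∈ A'
        · rw [if_pos hpA, if_pos hpA']
          rcases hind A hA A' hA' with h | h | h | h
          · exact absurd (Set.eq_empty_iff_forall_notMem.1 h p ⟨hpA, hpA'⟩) not_false
          · exact Or.inr (Or.inl fun x hx =>
              ⟨hx.1, fun hxA => hx.2 (Set.diff_eq_empty.1 h hxA)⟩)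
          · exact Or.inl fun x hx => ⟨hx.1, fun hxA' => hx.2 (Set.diff_eq_empty.1 h hxA')⟩
          · refine Or.inr (Or.inr (Set.eq_empty_iff_forall_notMem.2 fun x hx => ?_))
            have : x ∈ A ∪ A' := by rw [Set.compl_empty_iff.1 h]; trivial
            rcases this with h' | h'
            · exact hx.1.2 h'
            · exact hx.2.2 h'
        · rw [if_pos hpA, if_neg hpA']
          rcases hind A hA A' hA' with h | h | h | h
          · exact Or.inr (Or.inl fun x hx =>
              ⟨hx.2, fun hxA => Set.eq_empty_iff_forall_notMem.1 h x ⟨hxA, hx.1⟩⟩)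
          · exact absurd (Set.diff_eq_empty.1 h hpA) hpA'
          · refine Or.inr (Or.inr (Set.eq_empty_iff_forall_notMem.2 fun x hx => ?_))
            exact hx.1.2 (Set.diff_eq_empty.1 h hx.2.1)
          · refine Or.inl fun x hx => ?_
            have : x ∈ A ∪ A' := by rw [Set.compl_empty_iff.1 h]; trivial
            rcases this with h' | h'
            · exact absurd h' hx.2
            · exact ⟨h', hx.1⟩
      · by_cases hpA' : p ∈ A'
        · rw [if_neg hpA, if_pos hpA']
          rcases hind A hA A' hA' with h | h | h | h
          · exact Or.inl fun x hx =>
              ⟨hx.2, fun hxA' => Set.eq_empty_iff_forall_notMem.1 h x ⟨hx.1, hxA'⟩⟩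
          · refine Or.inr (Or.inr (Set.eq_empty_iff_forall_notMem.2 fun x hx => ?_))
            exact hx.2.2 (Set.diff_eq_empty.1 h hx.1.1)
          · exact absurd (Set.diff_eq_empty.1 h hpA') hpA
          · refine Or.inr (Or.inl fun x hx => ?_)
            have : x ∈ A ∪ A' := by rw [Set.compl_empty_iff.1 h]; trivial
            rcases this with h' | h'
            · exact ⟨h', hx.1⟩
            · exact absurd h' hx.2
        · rw [if_neg hpA, if_neg hpA']
          rcases hind A hA A' hA' with h | h | h | h
          · refine Or.inr (Or.inr (Set.eq_empty_iff_forall_notMem.2 fun x hx => ?_))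
            exact Set.eq_empty_iff_forall_notMem.1 h x ⟨hx.1.1, hx.2.1⟩
          · exact Or.inl fun x hx => ⟨Set.diff_eq_empty.1 h hx.1, hx.2⟩
          · exact Or.inr (Or.inl fun x hx => ⟨Set.diff_eq_empty.1 h hx.1, hx.2⟩)
          · exfalso
            have : p ∈ A ∪ A' := by rw [Set.compl_empty_iff.1 h]; trivial
            rcases this with h' | h'
            · exact hpA h'
            · exact hpA' h'
    obtain ⟨f, hinj, _, hcvx⟩ := finOrder s.card s le_rfl ℬs hsub hlam
    refine ⟨f, hinj, fun A hA => ?_⟩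
    by_cases hpA : p ∈ A
    · refine Or.inr fun a ha b hb c hc hab hbc haA hcA => ?_
      have hB : ((↑s : Set M) \ A) ∈ ℬs := ⟨A, hA, by rw [if_pos hpA]⟩
      exact (hcvx _ hB a ha b hb c hc hab hbc ⟨Finset.mem_coe.2 ha, haA⟩
        ⟨Finset.mem_coe.2 hc, hcA⟩).2
    · refine Or.inl fun a ha b hb c hc hab hbc haA hcA => ?_
      have hB : (A ∩ ↑s) ∈ ℬs := ⟨A, hA, by rw [if_neg hpA]⟩
      exact (hcvx _ hB a ha b hb c hc hab hbc ⟨haA, Finset.mem_coe.2 ha⟩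
        ⟨hcA, Finset.mem_coe.2 hc⟩).1

end CvxAux

universe w

-- main theorem, to be appended after all aux lemmas
open CvxAux

theorem stmt_6 {L : Language} (T : L.Theory) (hcomp : T.IsComplete)
    (hsat : T.IsSatisfiable)
    (Φ : Set ((m : ℕ) × L.Formula (Unit ⊕ Fin m)))
    (ha : ∀ (M : Type w) [Nonempty M] [L.Structure M], M ⊨ T →
      IndepDimLEOne {S : Set M | ∃ p ∈ Φ, ∃ b : Fin p.1 → M, S = realizeSet L M p.2 b})
    (hb : ∀ (M : Type w) [Nonempty M] [L.Structure M], M ⊨ T →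
      ∀ (m : ℕ) (ψ : L.Formula (Unit ⊕ Fin m)) (b : Fin m → M),
        GenBoolAlg {S : Set M | ∃ p ∈ Φ, ∃ c : Fin p.1 → M, S = realizeSet L M p.2 c}
          (realizeSet L M ψ b)) :
    ∀ (M : Type w) [Nonempty M] [L.Structure M], M ⊨ T → ConvexlyOrderable L M := by
  classical
  intro M _ _ hMT
  set 𝒜 : Set (Set M) := {S : Set M | ∃ p ∈ Φ, ∃ b : Fin p.1 → M, S = realizeSet L M p.2 b}
    with h𝒜
  have hind : IndepDimLEOne 𝒜 := ha M hMT
  -- stage orders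
  obtain ⟨F, hFinj, hFA⟩ :
      ∃ F : Finset M → M → ℕ, (∀ s, Set.InjOn (F s) ↑s) ∧
        ∀ s, ∀ A ∈ 𝒜,
          (∀ a ∈ s, ∀ b ∈ s, ∀ c ∈ s,
            F s a < F s b → F s b < F s c → a ∈ A → c ∈ A → b ∈ A) ∨
          (∀ a ∈ s, ∀ b ∈ s, ∀ c ∈ s,
            F s a < F s b → F s b < F s c → a ∉ A → c ∉ A → b ∉ A) := by
    have := fun s => key_stage 𝒜 hind s
    choose F h1 h2 using this
    exact ⟨F, h1, h2⟩
  letI lo : LinearOrder M := linearOrderOfSTO WellOrderingRel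
  -- the stage-s global order
  set G : Finset M → M → ℕ ⊕ₗ M := fun s x =>
    if x ∈ s then toLex (Sum.inl (F s x)) else toLex (Sum.inr x) with hG
  have hGinj : ∀ s, Function.Injective (G s) := by
    intro s x y hxy
    by_cases hx : x ∈ s <;> by_cases hy : y ∈ s <;>
      simp only [hG, if_pos, if_neg, hx, hy, if_true, if_false] at hxy
    · exact hFinj s hx hy (Sum.inl.inj (toLex.injective hxy))
    · exact absurd (toLex.injective hxy) (by simp)
    · exact absurd (toLex.injective hxy) (by simp)
    · exact Sum.inr.inj (toLex.injective hxy)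
  set rS : Finset M → M → M → Prop := fun s a b => G s a < G s b with hrS
  have hSTO : ∀ s, IsStrictTotalOrder M (rS s) := fun s => sto_pullback (hGinj s)
  -- the ultrafilter on stages
  haveI : (Filter.atTop : Filter (Finset M)).NeBot := Filter.atTop_neBot
  set 𝒰 : Ultrafilter (Finset M) := Ultrafilter.of Filter.atTop with h𝒰
  have hmemU : ∀ a : M, {s : Finset M | a ∈ s} ∈ 𝒰 := by
    intro a
    apply Ultrafilter.of_le Filter.atTop
    exact Filter.mem_of_superset (Filter.Ici_mem_atTop {a})
      (fun s hs => Finset.singleton_subset_iff.1 (Finset.le_iff_subset.1 (Set.mem_Ici.1 hs)))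
  -- the limit order
  set r : M → M → Prop := fun a b => {s : Finset M | rS s a b} ∈ 𝒰 with hr
  have hrSTO : IsStrictTotalOrder M r := by
    refine { trichotomous := ?_, irrefl := ?_, trans := ?_ }
    · -- trichotomous
      intro a b hn1 hn2
      refine (?_ : r a b ∨ a = b ∨ r b a).elim (fun h => absurd h hn1)
        (fun h => h.resolve_right hn2)
      by_cases hab : a = b
      · exact Or.inr (Or.inl hab)
      have huniv : {s : Finset M | rS s a b} ∪ {s : Finset M | rS s b a} = Set.univ := by
        ext s
        simp only [Set.mem_union, Set.mem_setOf_eq, Set.mem_univ, iff_true]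
        rcases (haveI := hSTO s; trichotomous_of (rS s) a b) with h | h | h
        · exact Or.inl h
        · exact absurd h hab
        · exact Or.inr h
      have hUm : {s : Finset M | rS s a b} ∪ {s : Finset M | rS s b a} ∈ 𝒰 := by
        rw [huniv]
        exact Filter.univ_mem
      rcases Ultrafilter.union_mem_iff.1 hUm with h | h
      · exact Or.inl h
      · exact Or.inr (Or.inr h)
    · -- irrefl
      intro a hmem
      have : {s : Finset M | rS s a a} = ∅ := by
        ext s
        simp only [Set.mem_setOf_eq, Set.mem_empty_iff_false, iff_false]
        exact (hSTO s).irrefl a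
      have hmem' : {s : Finset M | rS s a a} ∈ (𝒰 : Filter (Finset M)) := hmem
      rw [this] at hmem'
      exact Filter.empty_notMem (𝒰 : Filter (Finset M)) hmem'
    · -- trans
      intro a b c hab hbc
      refine Filter.mem_of_superset (Filter.inter_mem hab hbc) ?_
      rintro s ⟨h1, h2⟩
      exact (hSTO s).trans a b c h1 h2
  refine ⟨r, hrSTO, fun m ψ => ?_⟩
  -- uniform finite family of templates via ultraproduct compactness
  set D : Tmpl L Φ → Set (Fin m → M) :=
    fun t => {b : Fin m → M | (chi ψ t.toFormula).Realize b} with hD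
  have hcover : ∀ b : Fin m → M, ∃ t : Tmpl L Φ, b ∈ D t := by
    intro b
    obtain ⟨t, d, heq⟩ := Tmpl.genBoolAlg_exists (hb M hMT m ψ b)
    refine ⟨t, ?_⟩
    rw [hD]
    exact Set.mem_setOf_eq ▸ (realize_chi ψ t.toFormula b).2
      ⟨d, by rw [heq, Tmpl.realize_toFormula]⟩
  have hfincover : ∃ Gc : Finset (Set (Fin m → M)),
      (∀ E ∈ Gc, ∃ t : Tmpl L Φ, E = D t) ∧ ∀ b : Fin m → M, ∃ E ∈ Gc, b ∈ E := by
    by_contra hno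
    push_neg at hno
    have hbs : ∀ Gc : Finset (Set (Fin m → M)), ∃ b : Fin m → M,
        ∀ t : Tmpl L Φ, D t ∈ Gc → b ∉ D t := by
      intro Gc
      obtain ⟨b, hb'⟩ := hno (Gc.filter (fun E => ∃ t : Tmpl L Φ, E = D t))
        (fun E hE => (Finset.mem_filter.1 hE).2)
      · exact ⟨b, fun t ht => hb' (D t) (Finset.mem_filter.2 ⟨ht, ⟨t, rfl⟩⟩)⟩
    choose bs hbs using hbs
    haveI : (Filter.atTop : Filter (Finset (Set (Fin m → M)))).NeBot := Filter.atTop_neBot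
    set 𝒱 : Ultrafilter (Finset (Set (Fin m → M))) := Ultrafilter.of Filter.atTop with h𝒱
    have hmemV : ∀ E : Set (Fin m → M), {Gc : Finset (Set (Fin m → M)) | E ∈ Gc} ∈ 𝒱 := by
      intro E
      apply Ultrafilter.of_le Filter.atTop
      exact Filter.mem_of_superset (Filter.Ici_mem_atTop {E})
        (fun Gc hGc => Finset.singleton_subset_iff.1 (Finset.le_iff_subset.1 (Set.mem_Ici.1 hGc)))
    set N := (𝒱 : Filter (Finset (Set (Fin m → M)))).Product
      (fun _ : Finset (Set (Fin m → M)) => M) with hN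
    haveI : Nonempty N := Ultraproduct.Product.instNonempty
    have hNT : N ⊨ T := by
      refine (Theory.model_iff T).2 fun φ hφ => ?_
      exact (Ultraproduct.sentence_realize φ).2
        (Filter.Eventually.of_forall fun _ => (Theory.model_iff T).1 hMT φ hφ)
    set x : Fin m → ∀ _ : Finset (Set (Fin m → M)), M := fun j Gc => bs Gc j with hx
    set bN : Fin m → N := fun j => (x j : N) with hbN
    obtain ⟨t, d, heq⟩ := Tmpl.genBoolAlg_exists (hb N hNT m ψ bN)
    have hchiN : (chi ψ t.toFormula).Realize bN :=
      (realize_chi ψ t.toFormula bN).2 ⟨d, by rw [heq, Tmpl.realize_toFormula]⟩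
    have hev : ∀ᶠ Gc in (𝒱 : Filter (Finset (Set (Fin m → M)))),
        (chi ψ t.toFormula).Realize (fun j => x j Gc) :=
      (Ultraproduct.realize_formula_cast (chi ψ t.toFormula) x).1 hchiN
    have hcontra := (hev.and (hmemV (D t))).exists
    obtain ⟨Gc, h1, h2⟩ := hcontra
    exact hbs Gc t h2 h1
  obtain ⟨Gc, hGctmpl, hGccover⟩ := hfincover
  -- the uniform bound
  set K : ℕ := Gc.sup (fun E =>
    if h : ∃ t : Tmpl L Φ, E = D t then h.choose.bnd else 0) with hK
  refine ⟨K, fun b => ?_⟩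
  obtain ⟨E, hEG, hbE⟩ := hGccover b
  have hEt : ∃ t : Tmpl L Φ, E = D t := hGctmpl E hEG
  set t₀ : Tmpl L Φ := hEt.choose with ht₀
  have hEq : E = D t₀ := hEt.choose_spec
  have hbnd : t₀.bnd ≤ K := by
    rw [hK]
    have := Finset.le_sup (f := fun E =>
      if h : ∃ t : Tmpl L Φ, E = D t then h.choose.bnd else 0) hEG
    rwa [dif_pos hEt] at this
  have hbD : b ∈ D t₀ := hEq ▸ hbE
  obtain ⟨d, heq⟩ := (realize_chi ψ t₀.toFormula b).1 hbD
  rw [heq, Tmpl.realize_toFormula] at *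
  -- now prove no-alternation and conclude
  haveI := hrSTO
  apply uamc_of_not_alt (r := r)
  rintro ⟨aa, cc, hadj, haS, hcS⟩
  have hEv1 : ∀ᶠ s in (𝒰 : Filter (Finset M)), ∀ i : Fin K,
      rS s (aa i.castSucc) (cc i) ∧ rS s (cc i) (aa i.succ) := by
    rw [Filter.eventually_all]
    intro i
    have e1 : ∀ᶠ s in (𝒰 : Filter (Finset M)), rS s (aa i.castSucc) (cc i) := (hadj i).1
    have e2 : ∀ᶠ s in (𝒰 : Filter (Finset M)), rS s (cc i) (aa i.succ) := (hadj i).2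
    exact e1.and e2
  have hEv2 : ∀ᶠ s in (𝒰 : Filter (Finset M)),
      (∀ i, aa i ∈ s) ∧ (∀ i, cc i ∈ s) := by
    refine Filter.Eventually.and ?_ ?_ <;> rw [Filter.eventually_all] <;> intro i
    · exact hmemU (aa i)
    · exact hmemU (cc i)
  obtain ⟨s, h1, h2a, h2c⟩ := (hEv1.and hEv2).exists
  -- restrict to the subtype
  set X := {z : M // z ∈ s} with hX
  set rsub : X → X → Prop := fun u v => F s ↑u < F s ↑v with hrsub
  haveI hsubSTO : IsStrictTotalOrder X rsub := by
    apply sto_pullback (g := fun u : X => F s ↑u)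
    intro u v huv
    exact Subtype.ext (hFinj s (Finset.mem_coe.2 u.2) (Finset.mem_coe.2 v.2) huv)
  have hrs_mem : ∀ (u v : M), u ∈ s → v ∈ s → rS s u v → F s u < F s v := by
    intro u v hu hv huv
    simp only [hrS, hG] at huv
    rw [if_pos hu, if_pos hv] at huv
    exact Sum.Lex.inl_lt_inl_iff.1 huv
  -- atoms are unions of at most 2 convex sets in the subtype
  have hatoms : ∀ (p : (m' : ℕ) × L.Formula (Unit ⊕ Fin m')) (hp : p ∈ Φ)
      (bb : Fin p.1 → M), UnionOfAtMostConvex rsub 2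
        (Subtype.val ⁻¹' realizeSet L M p.2 bb : Set X) := by
    intro p hp bb
    have hA : realizeSet L M p.2 bb ∈ 𝒜 := ⟨p, hp, bb, rfl⟩
    rcases hFA s _ hA with hcvx | hccvx
    · refine uamc_mono (uamc_of_convex ?_) (by norm_num)
      intro u v w huv hvw hu hw
      exact hcvx ↑u u.2 ↑v v.2 ↑w w.2 huv hvw hu hw
    · have hc : IsRConvex rsub (Subtype.val ⁻¹' realizeSet L M p.2 bb : Set X)ᶜ := by
        intro u v w huv hvw hu hw
        exact hccvx ↑u u.2 ↑v v.2 ↑w w.2 huv hvw hu hw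
      have := compl_convex hc
      rwa [_root_.compl_compl] at this
  have hS' : UnionOfAtMostConvex rsub K
      (Subtype.val ⁻¹' Tmpl.eval (fun p _ bb => realizeSet L M p.2 bb) t₀ d : Set X) := by
    rw [Tmpl.eval_preimage]
    exact uamc_mono (uamc_eval _ hatoms t₀ d) hbnd
  refine not_alt_of_uamc hS' ⟨fun i => ⟨aa i, h2a i⟩, fun i => ⟨cc i, h2c i⟩, ?_, ?_, ?_⟩
  · intro i
    exact ⟨hrs_mem _ _ (h2a i.castSucc) (h2c i) (h1 i).1,
      hrs_mem _ _ (h2c i) (h2a i.succ) (h1 i).2⟩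
  · intro i
    exact haS i
  · intro i
    exact hcS i
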